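/- Well-posedness of the saddle-point problem (Brezzi): under the stated assumptions, for every f ∈ V and g ∈ Q there exists a unique pair (v,p) ∈ V × Q such that a(v,u) − b(u,p) = ⟨f,u⟩_V for all u ∈ V and b(v,q) = ⟨g,q⟩_Q for all q ∈ Q. -/

import Mathlib

open scoped RealInnerProductSpace
open InnerProductSpace

set_option maxHeartbeats 1000000 in
/-- Well-posedness of the saddle-point problem (Brezzi). -/
theorem saddle_point_well_posedness
    {V Q : Type*}
    [NormedAddCommGroup V] [InnerProductSpace ℝ V] [CompleteSpace V]
    [NormedAddCommGroup Q] [InnerProductSpace ℝ Q] [CompleteSpace Q]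
    (a : V →ₗ[ℝ] V →ₗ[ℝ] ℝ) (b : V →ₗ[ℝ] Q →ₗ[ℝ] ℝ)
    (γ α γb β : ℝ)
    (ha_bdd : ∀ u v : V, |a u v| ≤ γ * ‖u‖ * ‖v‖)
    (hα : 0 < α)
    (ha_coer : ∀ u : V, α * ‖u‖ ^ 2 ≤ a u u)
    (hb_bdd : ∀ (u : V) (q : Q), |b u q| ≤ γb * ‖u‖ * ‖q‖)
    (hβ : 0 < β)
    (hb_infsup : ∀ q : Q, β * ‖q‖ ≤ sSup {r : ℝ | ∃ u : V, u ≠ 0 ∧ r = b u q / ‖u‖})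
    (f : V) (g : Q) :
    ∃! vp : V × Q,
      (∀ u : V, a vp.1 u - b u vp.2 = ⟪f, u⟫) ∧ (∀ q : Q, b vp.1 q = ⟪g, q⟫) := by
  classical
  set γ' : ℝ := max γ α with hγ'def
  have hγ'pos : 0 < γ' := lt_max_of_lt_right hα
  have ha_bdd' : ∀ u v : V, ‖a u v‖ ≤ γ' * ‖u‖ * ‖v‖ := fun u v => by
    refine (ha_bdd u v).trans ?_
    have h0 : γ ≤ γ' := le_max_left _ _
    have h1 : (0:ℝ) ≤ ‖u‖ * ‖v‖ := by positivity
    calc γ * ‖u‖ * ‖v‖ = γ * (‖u‖ * ‖v‖) := by ring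
      _ ≤ γ' * (‖u‖ * ‖v‖) := mul_le_mul_of_nonneg_right h0 h1
      _ = γ' * ‖u‖ * ‖v‖ := by ring
  set γb' : ℝ := max γb 1 with hγb'def
  have hγb'pos : (0:ℝ) < γb' := lt_max_of_lt_right one_pos
  have hb_bdd' : ∀ (u : V) (q : Q), ‖b u q‖ ≤ γb' * ‖u‖ * ‖q‖ := fun u q => by
    refine (hb_bdd u q).trans ?_
    have h0 : γb ≤ γb' := le_max_left _ _
    have h1 : (0:ℝ) ≤ ‖u‖ * ‖q‖ := by positivity
    calc γb * ‖u‖ * ‖q‖ = γb * (‖u‖ * ‖q‖) := by ring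
      _ ≤ γb' * (‖u‖ * ‖q‖) := mul_le_mul_of_nonneg_right h0 h1
      _ = γb' * ‖u‖ * ‖q‖ := by ring
  set A : V →L[ℝ] V →L[ℝ] ℝ := LinearMap.mkContinuous₂ a γ' ha_bdd' with hAdef
  set B : V →L[ℝ] Q →L[ℝ] ℝ := LinearMap.mkContinuous₂ b γb' hb_bdd' with hBdef
  have hA_apply : ∀ u v : V, A u v = a u v := fun u v => rfl
  have hB_apply : ∀ (u : V) (q : Q), B u q = b u q := fun u q => rfl
  have hAcoer : IsCoercive A := by
    refine ⟨α, hα, fun u => ?_⟩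
    have h := ha_coer u
    rw [hA_apply]
    nlinarith [h]
  set Aeq : V ≃L[ℝ] V := hAcoer.continuousLinearEquivOfBilin with hAeqdef
  have hAeq : ∀ u v : V, ⟪Aeq u, v⟫ = a u v := fun u v =>
    hAcoer.continuousLinearEquivOfBilin_apply u v
  -- B* : Q →ₗ V with ⟪B* q, u⟫ = b u q
  set Bst : Q →ₗ[ℝ] V :=
    { toFun := fun q => (toDual ℝ V).symm (B.flip q)
      map_add' := fun q₁ q₂ => by
        show (toDual ℝ V).symm (B.flip (q₁ + q₂)) =
          (toDual ℝ V).symm (B.flip q₁) + (toDual ℝ V).symm (B.flip q₂)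
        rw [map_add, map_add]
      map_smul' := fun r q => by
        show (toDual ℝ V).symm (B.flip (r • q)) = r • (toDual ℝ V).symm (B.flip q)
        rw [map_smul, LinearIsometryEquiv.map_smulₛₗ]
        simp [starRingEnd_apply] } with hBstdef
  have hBst : ∀ (q : Q) (u : V), ⟪Bst q, u⟫ = b u q := fun q u => by
    simp only [hBstdef, LinearMap.coe_mk, AddHom.coe_mk, toDual_symm_apply]
    exact hB_apply u q
  -- inf-sup gives bounded below of Bst
  have hBst_below : ∀ q : Q, β * ‖q‖ ≤ ‖Bst q‖ := fun q => by
    refine (hb_infsup q).trans (Real.sSup_le ?_ (norm_nonneg _))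
    rintro r ⟨u, hu, rfl⟩
    have hu' : (0:ℝ) < ‖u‖ := norm_pos_iff.mpr hu
    rw [div_le_iff₀ hu']
    calc b u q = ⟪Bst q, u⟫ := (hBst q u).symm
      _ ≤ ‖Bst q‖ * ‖u‖ := real_inner_le_norm _ _
  -- ‖Bst q‖ ≤ γb' ‖q‖
  have hBst_above : ∀ q : Q, ‖Bst q‖ ≤ γb' * ‖q‖ := fun q => by
    rcases eq_or_lt_of_le (norm_nonneg (Bst q)) with h | h
    · rw [← h]; positivity
    · refine (mul_le_mul_iff_of_pos_right h).mp ?_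
      calc ‖Bst q‖ * ‖Bst q‖ = ⟪Bst q, Bst q⟫ := (real_inner_self_eq_norm_mul_norm _).symm
        _ = b (Bst q) q := hBst q (Bst q)
        _ ≤ ‖b (Bst q) q‖ := le_abs_self _
        _ ≤ γb' * ‖Bst q‖ * ‖q‖ := hb_bdd' _ q
        _ = γb' * ‖q‖ * ‖Bst q‖ := by ring
  -- ‖Aeq w‖ ≤ γ' ‖w‖  and  α ‖w‖ ≤ ‖Aeq w‖
  have hAeq_bdd : ∀ w : V, ‖Aeq w‖ ≤ γ' * ‖w‖ := fun w => by
    rcases eq_or_lt_of_le (norm_nonneg (Aeq w)) with h | h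
    · rw [← h]; positivity
    · refine (mul_le_mul_iff_of_pos_right h).mp ?_
      calc ‖Aeq w‖ * ‖Aeq w‖ = ⟪Aeq w, Aeq w⟫ := (real_inner_self_eq_norm_mul_norm _).symm
        _ = a w (Aeq w) := hAeq w _
        _ ≤ ‖a w (Aeq w)‖ := le_abs_self _
        _ ≤ γ' * ‖w‖ * ‖Aeq w‖ := ha_bdd' w _
        _ = γ' * ‖w‖ * ‖Aeq w‖ := rfl
  have hAeq_below : ∀ w : V, α * ‖w‖ ≤ ‖Aeq w‖ := fun w => by
    rcases eq_or_lt_of_le (norm_nonneg w) with h | h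
    · rw [← h]; simp
    · refine (mul_le_mul_iff_of_pos_right h).mp ?_
      calc α * ‖w‖ * ‖w‖ = α * ‖w‖ ^ 2 := by ring
        _ ≤ a w w := ha_coer w
        _ = ⟪Aeq w, w⟫ := (hAeq w w).symm
        _ ≤ ‖Aeq w‖ * ‖w‖ := real_inner_le_norm _ _
  -- w p = Aeq⁻¹ (Bst p), as a linear map
  set W : Q →ₗ[ℝ] V := (Aeq.symm : V →L[ℝ] V).toLinearMap.comp Bst with hWdef
  have hW_apply : ∀ p : Q, W p = Aeq.symm (Bst p) := fun p => rfl
  have hAW : ∀ p : Q, Aeq (W p) = Bst p := fun p => Aeq.apply_symm_apply _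
  have hW_bdd : ∀ p : Q, ‖W p‖ ≤ γb' / α * ‖p‖ := fun p => by
    have h1 : α * ‖W p‖ ≤ ‖Aeq (W p)‖ := hAeq_below _
    rw [hAW] at h1
    have h2 := hBst_above p
    have h3 : α * ‖W p‖ ≤ γb' * ‖p‖ := le_trans h1 h2
    rw [div_mul_eq_mul_div, le_div_iff₀ hα]
    linarith [h3]
  have hW_below : ∀ p : Q, β / γ' * ‖p‖ ≤ ‖W p‖ := fun p => by
    have h1 : β * ‖p‖ ≤ ‖Bst p‖ := hBst_below p
    have h2 : ‖Aeq (W p)‖ ≤ γ' * ‖W p‖ := hAeq_bdd _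
    rw [hAW] at h2
    rw [div_mul_eq_mul_div, div_le_iff₀ hγ'pos]
    calc β * ‖p‖ ≤ ‖Bst p‖ := h1
      _ ≤ γ' * ‖W p‖ := h2
      _ = ‖W p‖ * γ' := by ring
  -- Schur form
  set slin : Q →ₗ[ℝ] Q →ₗ[ℝ] ℝ := b.comp W with hslindef
  have hslin : ∀ p q : Q, slin p q = b (W p) q := fun p q => rfl
  have hslin_bdd : ∀ p q : Q, ‖slin p q‖ ≤ (γb' * (γb' / α)) * ‖p‖ * ‖q‖ := fun p q => by
    calc ‖slin p q‖ = ‖b (W p) q‖ := rfl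
      _ ≤ γb' * ‖W p‖ * ‖q‖ := hb_bdd' _ _
      _ ≤ γb' * (γb' / α * ‖p‖) * ‖q‖ := by
          have h0 := hW_bdd p
          have hq : (0:ℝ) ≤ ‖q‖ := norm_nonneg _
          have hγb'' : (0:ℝ) ≤ γb' := le_of_lt hγb'pos
          exact mul_le_mul_of_nonneg_right
            (mul_le_mul_of_nonneg_left h0 hγb'') hq
      _ = (γb' * (γb' / α)) * ‖p‖ * ‖q‖ := by ring
  set sform : Q →L[ℝ] Q →L[ℝ] ℝ := LinearMap.mkContinuous₂ slin _ hslin_bdd with hsformdef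
  have hsform : ∀ p q : Q, sform p q = b (W p) q := fun p q => rfl
  have hScoer : IsCoercive sform := by
    refine ⟨α * β ^ 2 / γ' ^ 2, by positivity, fun p => ?_⟩
    have hSw : sform p p = a (W p) (W p) := by
      rw [hsform, ← hBst p (W p), ← hAW p, hAeq]
    have hw1 : α * ‖W p‖ ^ 2 ≤ sform p p := by
      rw [hSw]; exact ha_coer (W p)
    have hw2 : β / γ' * ‖p‖ ≤ ‖W p‖ := hW_below p
    have hp : 0 ≤ ‖p‖ := norm_nonneg _
    have hw : 0 ≤ ‖W p‖ := norm_nonneg _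
    have h3 : (β / γ' * ‖p‖) ^ 2 ≤ ‖W p‖ ^ 2 :=
      pow_le_pow_left₀ (by positivity) hw2 2
    have h4 : α * (β / γ' * ‖p‖) ^ 2 ≤ α * ‖W p‖ ^ 2 :=
      mul_le_mul_of_nonneg_left h3 (le_of_lt hα)
    have h5 : α * β ^ 2 / γ' ^ 2 * ‖p‖ * ‖p‖ = α * (β / γ' * ‖p‖) ^ 2 := by
      field_simp
    linarith [h4, hw1, h5.le, h5.ge]
  set Seq : Q ≃L[ℝ] Q := hScoer.continuousLinearEquivOfBilin with hSeqdef
  have hSeq : ∀ p q : Q, ⟪Seq p, q⟫ = b (W p) q := fun p q =>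
    hScoer.continuousLinearEquivOfBilin_apply p q
  -- right hand side for the Schur problem
  set g' : Q := g - (toDual ℝ Q).symm (B (Aeq.symm f)) with hg'def
  have hg' : ∀ q : Q, ⟪g', q⟫ = ⟪g, q⟫ - b (Aeq.symm f) q := fun q => by
    rw [hg'def, inner_sub_left, toDual_symm_apply]
    rfl
  set p₀ : Q := Seq.symm g' with hp₀def
  set v₀ : V := Aeq.symm (f + Bst p₀) with hv₀def
  have hSp₀ : ∀ q : Q, b (W p₀) q = ⟪g, q⟫ - b (Aeq.symm f) q := fun q => by
    rw [← hSeq, hp₀def, Seq.apply_symm_apply, hg']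
  have sol1 : ∀ u : V, a v₀ u - b u p₀ = ⟪f, u⟫ := fun u => by
    rw [← hAeq, hv₀def, Aeq.apply_symm_apply, ← hBst p₀ u, inner_add_left]
    ring
  have hv₀split : v₀ = Aeq.symm f + W p₀ := by
    rw [hv₀def, map_add, hW_apply]
  have sol2 : ∀ q : Q, b v₀ q = ⟪g, q⟫ := fun q => by
    have h1 : b v₀ q = b (Aeq.symm f) q + b (W p₀) q := by
      rw [hv₀split, map_add, LinearMap.add_apply]
    rw [h1, hSp₀]; ring
  refine ⟨(v₀, p₀), ⟨sol1, sol2⟩, ?_⟩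
  rintro ⟨v, p⟩ ⟨hv, hp⟩
  have key1 : ∀ u : V, a (v - v₀) u = b u (p - p₀) := fun u => by
    have h1 := hv u; have h2 := sol1 u
    have hmapa : a (v - v₀) u = a v u - a v₀ u := by rw [map_sub, LinearMap.sub_apply]
    have hmapb : b u (p - p₀) = b u p - b u p₀ := map_sub _ _ _
    rw [hmapa, hmapb]; linarith
  have key2 : ∀ q : Q, b (v - v₀) q = 0 := fun q => by
    have h1 := hp q; have h2 := sol2 q
    have hmapb : b (v - v₀) q = b v q - b v₀ q := by rw [map_sub, LinearMap.sub_apply]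
    rw [hmapb, h1, h2]; ring
  have hAw : Aeq (v - v₀) = Bst (p - p₀) := by
    apply ext_inner_right ℝ
    intro u
    rw [hAeq, hBst, key1]
  have hWr : W (p - p₀) = v - v₀ := by
    rw [hW_apply, ← hAw, Aeq.symm_apply_apply]
  have hr : p - p₀ = 0 := by
    have hS0 : sform (p - p₀) (p - p₀) = 0 := by
      rw [hsform, hWr, key2]
    rcases hScoer with ⟨C, hC, hco⟩
    have h := hco (p - p₀)
    rw [hS0] at h
    have hnorm := norm_nonneg (p - p₀)
    rcases eq_or_lt_of_le hnorm with h' | h'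
    · exact norm_eq_zero.mp h'.symm
    · exfalso
      have hpos : 0 < C * ‖p - p₀‖ * ‖p - p₀‖ := by positivity
      linarith
  have hw0 : v - v₀ = 0 := by rw [← hWr, hr, map_zero]
  have hpp : p = p₀ := by rwa [sub_eq_zero] at hr
  have hvv : v = v₀ := by rwa [sub_eq_zero] at hw0
  simp [hpp, hvv]
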